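/- Let G = (V, E) be a finite directed acyclic graph where each node v has a real activation a_v, each edge v→u has a real weight k_{v,u}, and for every non-leaf node u (i.e., a node with in-degree > 0), a_u = ReLU(∑_{v→u∈E} k_{v,u}·a_v), where ReLU(x) = max(x, 0). Suppose every non-leaf node u on any path to a designated root node t satisfies a_u > 0 (so the ReLU is inactive along all relevant paths), and define the gradient ∇_{a_t} a_v as the sum over all directed paths from v to t of the products of edge weights along the path. Then a_t = ∑_{v : in-degree(v)=0} a_v · ∇_{a_t} a_v. -/

import Mathlib

open Finset

noncomputable section
open scoped Classical
open scoped List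

/-- Product of edge weights along a list of vertices. -/
def pathProd {n : ℕ} (k : Fin n → Fin n → ℝ) : List (Fin n) → ℝ
  | [] => 1
  | [_] => 1
  | i :: j :: rest => k i j * pathProd k (j :: rest)

/-- Vertex sets of potential (increasing) paths from `v` to `t`. -/
def pathFinsets {n : ℕ} (v t : Fin n) : Finset (Finset (Fin n)) :=
  Finset.univ.powerset.filter (fun S => v ∈ S ∧ t ∈ S ∧ ∀ w ∈ S, v ≤ w ∧ w ≤ t)

/-- Sum over all directed paths from `v` to `t` of the product of edge weights. -/
def pathSum {n : ℕ} (k : Fin n → Fin n → ℝ) (v t : Fin n) : ℝ :=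
  ∑ S ∈ pathFinsets v t, pathProd k (S.sort (· ≤ ·))

/-- There exists a genuine directed path (all edges present) from `v` to `t`. -/
def hasPath {n : ℕ} (k : Fin n → Fin n → ℝ) (v t : Fin n) : Prop :=
  ∃ S ∈ pathFinsets v t, (S.sort (· ≤ ·)).Chain' (fun i j => k i j ≠ 0)

-- membership lemma
lemma mem_pathFinsets {n : ℕ} {v t : Fin n} {S : Finset (Fin n)} :
    S ∈ pathFinsets v t ↔ v ∈ S ∧ t ∈ S ∧ ∀ w ∈ S, v ≤ w ∧ w ≤ t := by
  simp [pathFinsets]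

lemma pathProd_concat {n : ℕ} (k : Fin n → Fin n → ℝ) :
    ∀ (l : List (Fin n)) (u t : Fin n),
      pathProd k (l ++ [u, t]) = pathProd k (l ++ [u]) * k u t := by
  intro l
  induction l with
  | nil => intro u t; simp [pathProd]
  | cons i l ih =>
    intro u t
    cases l with
    | nil => simp [pathProd]
    | cons j l' =>
      show k i j * pathProd k (j :: (l' ++ [u, t])) = k i j * pathProd k (j :: (l' ++ [u])) * k u t
      rw [show j :: (l' ++ [u, t]) = (j :: l') ++ [u, t] from rfl, ih u t]
      simp only [List.cons_append]
      ring

lemma sort_insert_max {n : ℕ} (S : Finset (Fin n)) (t : Fin n)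
    (h : ∀ w ∈ S, w < t) :
    (insert t S).sort (· ≤ ·) = S.sort (· ≤ ·) ++ [t] := by
  have ht : t ∉ S := fun hm => lt_irrefl t (h t hm)
  refine (fun hp h1 h2 => List.Perm.eq_of_pairwise' (r := (· ≤ ·)) h1 h2 hp) ?_ ?_ ?_
  · calc (insert t S).sort (· ≤ ·) ~ (insert t S).toList := Finset.sort_perm_toList _ _
      _ ~ t :: S.toList := Finset.toList_insert ht
      _ ~ t :: S.sort (· ≤ ·) := List.Perm.cons t (Finset.sort_perm_toList _ _).symm
      _ ~ S.sort (· ≤ ·) ++ [t] := (List.perm_append_singleton _ _).symm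
  · exact Finset.pairwise_sort _ _
  · rw [List.pairwise_append]
    refine ⟨Finset.pairwise_sort _ _, List.pairwise_singleton _ _, ?_⟩
    intro x hx y hy
    rw [List.mem_singleton] at hy
    subst hy
    exact (h x ((Finset.mem_sort _).mp hx)).le

lemma sort_concat_of_max {n : ℕ} {S : Finset (Fin n)} {u : Fin n}
    (hu : u ∈ S) (hmax : ∀ w ∈ S, w ≤ u) :
    ∃ l, S.sort (· ≤ ·) = l ++ [u] := by
  have hne : S.sort (· ≤ ·) ≠ [] := by
    intro h
    have := (Finset.mem_sort (α := Fin n) (· ≤ ·)).mpr hu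
    simp [h] at this
  refine ⟨(S.sort (· ≤ ·)).dropLast, ?_⟩
  have hget : (S.sort (· ≤ ·)).getLast hne = u := by
    have h1 : (S.sort (· ≤ ·)).getLast hne ∈ S :=
      (Finset.mem_sort _).mp (List.getLast_mem hne)
    have h2 : (S.sort (· ≤ ·)).getLast hne ≤ u := hmax _ h1
    have h3 : u ≤ (S.sort (· ≤ ·)).getLast hne := by
      have hs := Finset.pairwise_sort S (· ≤ ·)
      have hmem := (Finset.mem_sort (α := Fin n) (· ≤ ·)).mpr hu
      have hdec := (List.dropLast_append_getLast hne).symm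
      rw [hdec] at hmem
      rw [hdec, List.pairwise_append] at hs
      rcases List.mem_append.mp hmem with h | h
      · exact hs.2.2 u h _ (List.mem_singleton_self _)
      · rw [List.mem_singleton] at h; exact h.le
    exact le_antisymm h2 h3
  rw [← hget]
  exact (List.dropLast_append_getLast hne).symm
lemma pathFinsets_self {n : ℕ} (t : Fin n) : pathFinsets t t = {{t}} := by
  ext S
  simp only [mem_pathFinsets, Finset.mem_singleton]
  constructor
  · rintro ⟨hv, -, hb⟩
    apply Finset.eq_singleton_iff_unique_mem.mpr
    exact ⟨hv, fun w hw => le_antisymm (hb w hw).2 (hb w hw).1⟩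
  · rintro rfl
    simp

lemma pathSum_self {n : ℕ} (k : Fin n → Fin n → ℝ) (t : Fin n) : pathSum k t t = 1 := by
  simp [pathSum, pathFinsets_self, pathProd]

lemma hasPath_self {n : ℕ} (k : Fin n → Fin n → ℝ) (t : Fin n) : hasPath k t t := by
  refine ⟨{t}, ?_, ?_⟩
  · simp [mem_pathFinsets]
  · simp; exact List.isChain_singleton _

lemma hasPath_extend {n : ℕ} {k : Fin n → Fin n → ℝ}
    (htopo : ∀ i j, k i j ≠ 0 → i < j) {u t : Fin n} (hk : k u t ≠ 0) {w : Fin n}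
    (h : hasPath k w u) : hasPath k w t := by
  obtain ⟨S, hS, hch⟩ := h
  rw [mem_pathFinsets] at hS
  obtain ⟨hw, hu, hb⟩ := hS
  have hut : u < t := htopo u t hk
  have hlt : ∀ x ∈ S, x < t := fun x hx => lt_of_le_of_lt (hb x hx).2 hut
  refine ⟨insert t S, ?_, ?_⟩
  · rw [mem_pathFinsets]
    refine ⟨Finset.mem_insert_of_mem hw, Finset.mem_insert_self _ _, ?_⟩
    intro x hx
    rcases Finset.mem_insert.mp hx with rfl | hx
    · exact ⟨le_of_lt (lt_of_le_of_lt (hb w hw).2 hut), le_refl _⟩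
    · exact ⟨(hb x hx).1, (hlt x hx).le⟩
  · rw [sort_insert_max S t hlt]
    obtain ⟨l, hl⟩ := sort_concat_of_max hu (fun x hx => (hb x hx).2)
    rw [hl] at hch ⊢
    rw [List.Chain', List.isChain_append]
    refine ⟨hch, List.isChain_singleton _, ?_⟩
    intro x hx y hy
    rw [List.getLast?_concat] at hx
    simp only [List.head?, Option.mem_some_iff] at hx hy
    rw [← hx, ← hy]
    exact hk

lemma pathSum_succ {n : ℕ} (k : Fin n → Fin n → ℝ)
    (htopo : ∀ i j, k i j ≠ 0 → i < j) (v t : Fin n) (hvt : v ≠ t) :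
    pathSum k v t = ∑ u, pathSum k v u * k u t := by
  have hext : ∑ u, pathSum k v u * k u t
      = ∑ u ∈ Finset.univ.filter (fun u => u < t), pathSum k v u * k u t := by
    refine (Finset.sum_filter_of_ne ?_).symm
    intro u _ h
    by_contra hut
    exact h (by rw [show k u t = 0 from by_contra fun hk => hut (htopo u t hk)]; ring)
  have hsig : ∑ u ∈ Finset.univ.filter (fun u => u < t), pathSum k v u * k u t
      = ∑ p ∈ (Finset.univ.filter (fun u => u < t)).sigma (fun u => pathFinsets v u),
          pathProd k (p.2.sort (· ≤ ·)) * k p.1 t := by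
    rw [Finset.sum_sigma]
    simp [pathSum, Finset.sum_mul]
  rw [hext, hsig, pathSum]
  symm
  refine Finset.sum_bij (fun p _ => insert t p.2) ?_ ?_ ?_ ?_
  · -- maps into pathFinsets v t
    rintro ⟨u, S'⟩ hp
    rw [Finset.mem_sigma, Finset.mem_filter, mem_pathFinsets] at hp
    obtain ⟨⟨-, hut⟩, hv', hu', hb'⟩ := hp
    rw [mem_pathFinsets]
    refine ⟨Finset.mem_insert_of_mem hv', Finset.mem_insert_self _ _, ?_⟩
    intro x hx
    rcases Finset.mem_insert.mp hx with rfl | hx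
    · exact ⟨le_of_lt (lt_of_le_of_lt (hb' v hv').2 hut), le_refl _⟩
    · exact ⟨(hb' x hx).1, ((hb' x hx).2.trans_lt hut).le⟩
  · -- injectivity
    rintro ⟨u₁, S₁⟩ h₁ ⟨u₂, S₂⟩ h₂ heq
    rw [Finset.mem_sigma, Finset.mem_filter, mem_pathFinsets] at h₁ h₂
    obtain ⟨⟨-, hut₁⟩, hv₁, hu₁, hb₁⟩ := h₁
    obtain ⟨⟨-, hut₂⟩, hv₂, hu₂, hb₂⟩ := h₂
    have ht₁ : t ∉ S₁ := fun h => absurd ((hb₁ t h).2.trans_lt hut₁) (lt_irrefl t)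
    have ht₂ : t ∉ S₂ := fun h => absurd ((hb₂ t h).2.trans_lt hut₂) (lt_irrefl t)
    have hS : S₁ = S₂ := by
      have heq' : insert t S₁ = insert t S₂ := heq
      rw [← Finset.erase_insert ht₁, ← Finset.erase_insert ht₂, heq']
    subst hS
    have hu : u₁ = u₂ := le_antisymm (hb₂ u₁ hu₁).2 (hb₁ u₂ hu₂).2
    subst hu
    rfl
  · -- surjectivity
    intro S hS
    rw [mem_pathFinsets] at hS
    obtain ⟨hv, ht, hb⟩ := hS
    have hv' : v ∈ S.erase t := Finset.mem_erase.mpr ⟨hvt, hv⟩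
    have hne : (S.erase t).Nonempty := ⟨v, hv'⟩
    set u := (S.erase t).max' hne with hu
    have humem : u ∈ S.erase t := Finset.max'_mem _ hne
    have hut : u < t := by
      have := Finset.mem_erase.mp humem
      exact lt_of_le_of_ne (hb u this.2).2 this.1
    refine ⟨⟨u, S.erase t⟩, ?_, ?_⟩
    · rw [Finset.mem_sigma, Finset.mem_filter, mem_pathFinsets]
      refine ⟨⟨Finset.mem_univ _, hut⟩, hv', humem, ?_⟩
      intro x hx
      exact ⟨(hb x (Finset.mem_erase.mp hx).2).1, Finset.le_max' _ x hx⟩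
    · exact Finset.insert_erase ht
  · -- value equality
    rintro ⟨u, S'⟩ hp
    rw [Finset.mem_sigma, Finset.mem_filter, mem_pathFinsets] at hp
    obtain ⟨⟨-, hut⟩, hv', hu', hb'⟩ := hp
    have hlt : ∀ x ∈ S', x < t := fun x hx => (hb' x hx).2.trans_lt hut
    rw [sort_insert_max S' t hlt]
    obtain ⟨l, hl⟩ := sort_concat_of_max hu' (fun x hx => (hb' x hx).2)
    rw [hl, List.append_assoc]
    exact (pathProd_concat k l u t).symm

lemma pathSum_leaf {n : ℕ} (k : Fin n → Fin n → ℝ)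
    (htopo : ∀ i j, k i j ≠ 0 → i < j) {v t : Fin n} (hvt : v ≠ t)
    (hleaf : ∀ u, k u t = 0) : pathSum k v t = 0 := by
  rw [pathSum_succ k htopo v t hvt]
  simp [hleaf]


/-- Path sum restricted to paths all of whose intermediate nodes are activated. -/
def actPathSum {n : ℕ} (k : Fin n → Fin n → ℝ) (a : Fin n → ℝ) (v t : Fin n) : ℝ :=
  ∑ S ∈ (pathFinsets v t).filter (fun S => ∀ w ∈ S, w ≠ v → w ≠ t → 0 < a w),
    pathProd k (S.sort (· ≤ ·))

/-- Existence of an activated path (edges present, intermediate nodes activated). -/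
def hasActPath {n : ℕ} (k : Fin n → Fin n → ℝ) (a : Fin n → ℝ) (v t : Fin n) : Prop :=
  ∃ S ∈ pathFinsets v t, (S.sort (· ≤ ·)).Chain' (fun i j => k i j ≠ 0) ∧
    ∀ w ∈ S, w ≠ v → w ≠ t → 0 < a w

/-- In a finite DAG (topologically sorted so that edges go from lower
to higher index) with ReLU node semantics, if every non-leaf node lying on some
path to the root  is strictly activated, then the root activation equals the sum
over leaves of activation times the path-sum gradient. -/
theorem relu_graph_leaf_attribution {n : ℕ} (k : Fin n → Fin n → ℝ) (a : Fin n → ℝ)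
    (t : Fin n)
    (htopo : ∀ i j, k i j ≠ 0 → i < j)
    (hrec : ∀ u, (∃ v, k v u ≠ 0) → a u = max (∑ v, k v u * a v) 0)
    (hpos : ∀ u, (∃ v, k v u ≠ 0) → hasPath k u t → 0 < a u) :
    a t = ∑ v ∈ Finset.univ.filter (fun v => ∀ u, k u v = 0), a v * pathSum k v t := by
  have H : ∀ (N : ℕ) (t : Fin n), (t : ℕ) < N →
      (∀ u, (∃ v, k v u ≠ 0) → hasPath k u t → 0 < a u) →
      a t = ∑ v ∈ Finset.univ.filter (fun v => ∀ u, k u v = 0), a v * pathSum k v t := by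
    intro N
    induction N with
    | zero => intro t ht; omega
    | succ N ih =>
      intro t ht hpos
      by_cases hleaf : ∃ v, k v t ≠ 0
      · -- non-leaf case
        have hat : 0 < a t := hpos t hleaf (hasPath_self k t)
        have hsum : a t = ∑ v, k v t * a v := by
          have h := hrec t hleaf
          rcases le_or_gt (∑ v, k v t * a v) 0 with h0 | h0
          · rw [h, max_eq_right h0] at hat
            exact absurd hat (lt_irrefl 0)
          · rw [h, max_eq_left h0.le]
        have hstep : ∀ u, k u t ≠ 0 →
            a u = ∑ v ∈ Finset.univ.filter (fun v => ∀ w, k w v = 0), a v * pathSum k v u := by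
          intro u hk
          have hut : u < t := htopo u t hk
          exact ih u (by omega) (fun w hw hp => hpos w hw (hasPath_extend htopo hk hp))
        have hvne : ∀ v ∈ Finset.univ.filter (fun v => ∀ w, k w v = 0), v ≠ t := by
          intro v hv h
          obtain ⟨w, hw⟩ := hleaf
          subst h
          exact hw ((Finset.mem_filter.mp hv).2 w)
        calc a t = ∑ u, k u t * a u := hsum
          _ = ∑ u ∈ Finset.univ.filter (fun u => k u t ≠ 0), k u t * a u := by
            refine (Finset.sum_filter_of_ne ?_).symm
            intro u _ h hk
            exact h (by rw [hk]; ring)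
          _ = ∑ u ∈ Finset.univ.filter (fun u => k u t ≠ 0),
                k u t * ∑ v ∈ Finset.univ.filter (fun v => ∀ w, k w v = 0),
                  a v * pathSum k v u := by
            refine Finset.sum_congr rfl fun u hu => ?_
            rw [← hstep u (Finset.mem_filter.mp hu).2]
          _ = ∑ v ∈ Finset.univ.filter (fun v => ∀ w, k w v = 0),
                a v * ∑ u ∈ Finset.univ.filter (fun u => k u t ≠ 0),
                  pathSum k v u * k u t := by
            simp only [Finset.mul_sum]
            rw [Finset.sum_comm]
            exact Finset.sum_congr rfl fun v _ => Finset.sum_congr rfl fun u _ => by ring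
          _ = ∑ v ∈ Finset.univ.filter (fun v => ∀ w, k w v = 0),
                a v * ∑ u, pathSum k v u * k u t := by
            refine Finset.sum_congr rfl fun v _ => ?_
            congr 1
            refine Finset.sum_filter_of_ne ?_
            intro u _ h hk
            exact h (by rw [hk]; ring)
          _ = ∑ v ∈ Finset.univ.filter (fun v => ∀ w, k w v = 0), a v * pathSum k v t := by
            refine Finset.sum_congr rfl fun v hv => ?_
            rw [← pathSum_succ k htopo v t (hvne v hv)]
      · -- leaf case
        push_neg at hleaf
        rw [Finset.sum_eq_single t]
        · rw [pathSum_self]; ring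
        · intro v hv hvt
          rw [pathSum_leaf k htopo hvt hleaf]; ring
        · intro h
          exact absurd (Finset.mem_filter.mpr ⟨Finset.mem_univ t, hleaf⟩) h
  exact H n t t.isLt hpos
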